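/- For each i ∈ I = {1,…,m}, let f_i : H → ℝ be convex and continuous with C := ⋂_{i∈I} S(f_i, 0) ≠ ∅, and let {x^k} be generated by the double-layer subgradient projection algorithm x^{k+1} := x^k + α_k(Σ_{i∈I_k} ω_i^k P_{f_i} x^k − x^k) under conditions (i) and (ii), and assume: (iii) if lim_{k→∞} max_{i∈I_k} ‖P_{f_i} x^k − x^k‖ = 0 then lim_{k→∞} max_{j∈J_k} ‖P_{f_j} x^k − x^k‖ = 0; (iv) each f_i is Lipschitz continuous on bounded sets. Then {x^k} converges weakly to some point x^∞ ∈ C. -/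

import Mathlib

open Filter Metric Bornology RealInnerProductSpace

/-- The subgradient projection associated with `f` and a subgradient selection `g`. -/
noncomputable def subgradProj {E : Type*} [NormedAddCommGroup E] [InnerProductSpace ℝ E]
    (f : E → ℝ) (g : E → E) : E → E := fun x =>
  if 0 < f x then x - (f x / ‖g x‖ ^ 2) • g x else x

section Aux
variable {E : Type*} [NormedAddCommGroup E] [InnerProductSpace ℝ E]
    {f : E → ℝ} {g : E → E}

lemma subgradProj_cutter (hsub : ∀ y z : E, f y + ⟪g y, z - y⟫ ≤ f z)
    {z : E} (hz : f z ≤ 0) (x : E) :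
    ⟪x - subgradProj f g x, z - subgradProj f g x⟫ ≤ 0 := by
  unfold subgradProj
  by_cases hfx : 0 < f x
  · simp only [if_pos hfx]
    have hgz : ⟪g x, z - x⟫ ≤ f z - f x := by have := hsub x z; linarith
    have hg0 : g x ≠ 0 := by
      intro h
      rw [h, inner_zero_left] at hgz; linarith
    have hng : (0:ℝ) < ‖g x‖ ^ 2 := pow_pos (norm_pos_iff.2 hg0) 2
    set t := f x / ‖g x‖ ^ 2 with ht
    have ht0 : 0 < t := div_pos hfx hng
    have htg : t * ‖g x‖ ^ 2 = f x := div_mul_cancel₀ _ (ne_of_gt hng)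
    have h1 : x - (x - t • g x) = t • g x := by abel
    have h2 : z - (x - t • g x) = (z - x) + t • g x := by abel
    rw [h1, h2, inner_add_right, real_inner_smul_left, real_inner_smul_left,
      real_inner_smul_right, real_inner_self_eq_norm_sq]
    nlinarith [mul_le_mul_of_nonneg_left hgz ht0.le]
  · simp [if_neg hfx]

lemma subgradProj_inner_le (hsub : ∀ y z : E, f y + ⟪g y, z - y⟫ ≤ f z)
    {z : E} (hz : f z ≤ 0) (x : E) :
    ⟪x - z, subgradProj f g x - x⟫ ≤ -‖subgradProj f g x - x‖ ^ 2 := by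
  have h := subgradProj_cutter hsub hz x
  set P := subgradProj f g x
  have h1 : z - P = (z - x) + (x - P) := by abel
  rw [h1, inner_add_right, real_inner_self_eq_norm_sq] at h
  have h2 : ⟪x - z, P - x⟫ = ⟪x - P, z - x⟫ := by
    rw [show x - z = -(z - x) by abel, show P - x = -(x - P) by abel,
      inner_neg_neg, real_inner_comm]
  have h3 : ‖P - x‖ = ‖x - P‖ := norm_sub_rev _ _
  rw [h2, h3]; linarith

lemma subgradProj_norm_mul (x : E) (hfx : 0 < f x) (hg : g x ≠ 0) :
    f x = ‖g x‖ * ‖subgradProj f g x - x‖ := by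
  unfold subgradProj
  rw [if_pos hfx]
  have h1 : x - (f x / ‖g x‖ ^ 2) • g x - x = -((f x / ‖g x‖ ^ 2) • g x) := by abel
  have hng : (0:ℝ) < ‖g x‖ := norm_pos_iff.2 hg
  rw [h1, norm_neg, norm_smul, Real.norm_eq_abs, abs_of_pos (div_pos hfx (by positivity))]
  field_simp [pow_two]

lemma MapClusterPt.eq_of_tendsto_real {α : Type*} {F : Filter α} [F.NeBot] {u : α → ℝ} {a b : ℝ}
    (h : MapClusterPt a F u) (h' : Tendsto u F (nhds b)) : a = b := by
  have h1 : NeBot (nhds a ⊓ Filter.map u F) := h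
  have h2 : nhds a ⊓ Filter.map u F ≤ nhds a ⊓ nhds b := inf_le_inf_left _ h'
  exact eq_of_nhds_neBot (h1.mono h2)

lemma tendsto_of_mapClusterPt_unique {c : ℕ → ℝ} {M L : ℝ}
    (hb : ∀ k, |c k| ≤ M)
    (hu : ∀ c', MapClusterPt c' atTop c → c' = L) :
    Tendsto c atTop (nhds L) := by
  by_contra hcon
  rw [Metric.tendsto_atTop] at hcon
  push_neg at hcon
  obtain ⟨ε, hε, hfreq⟩ := hcon
  have hne : (atTop ⊓ 𝓟 {k | ε ≤ dist (c k) L}).NeBot := by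
    rw [inf_principal_neBot_iff]
    intro U hU
    obtain ⟨N, hN⟩ := mem_atTop_sets.1 hU
    obtain ⟨n, hn, hdist⟩ := hfreq N
    exact ⟨n, hN n hn, hdist⟩
  have hmap : Filter.map c (atTop ⊓ 𝓟 {k | ε ≤ dist (c k) L}) ≤ 𝓟 (Set.Icc (-M) M) := by
    rw [Filter.le_principal_iff, Filter.mem_map]
    refine Filter.univ_mem' fun k => ?_
    exact abs_le.1 (hb k)
  obtain ⟨c', _, hc'⟩ := isCompact_Icc.exists_mapClusterPt hmap
  have hcL : c' = L := hu c' (hc'.mono inf_le_left)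
  rw [hcL] at hc'
  have hfreq2 : ∃ᶠ k in atTop ⊓ 𝓟 {k | ε ≤ dist (c k) L}, c k ∈ ball L ε :=
    mapClusterPt_iff_frequently.1 hc' _ (ball_mem_nhds _ hε)
  have hev : ∀ᶠ k in atTop ⊓ 𝓟 {k | ε ≤ dist (c k) L}, ε ≤ dist (c k) L :=
    eventually_inf_principal.2 (Eventually.of_forall fun k hk => hk)
  obtain ⟨k, h1, h2⟩ := (hfreq2.and_eventually hev).exists
  rw [mem_ball] at h1
  linarith

end Aux

set_option maxHeartbeats 1600000 in
/-- Weak convergence of the double-layer subgradient projection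
algorithm in a Hilbert space, for convex continuous functions that are Lipschitz
continuous on bounded sets. -/
theorem doubleLayer_subgradient_weak_convergence
    {H : Type*} [NormedAddCommGroup H] [InnerProductSpace ℝ H] [CompleteSpace H]
    {m : ℕ} [NeZero m]
    (f : Fin m → H → ℝ) (g : Fin m → H → H)
    (hconv : ∀ i, ConvexOn ℝ Set.univ (f i)) (hcont : ∀ i, Continuous (f i))
    (hsub : ∀ i, ∀ y z : H, f i y + ⟪g i y, z - y⟫ ≤ f i z)
    (hC : (⋂ i, {z : H | f i z ≤ 0}).Nonempty)
    (x : ℕ → H) (Ik Jk : ℕ → Finset (Fin m)) (α : ℕ → ℝ) (ω : ℕ → Fin m → ℝ)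
    (hIkne : ∀ k, (Ik k).Nonempty) (hIJ : ∀ k, Ik k ⊆ Jk k)
    (αminus αplus ωminus : ℝ)
    (hαminus : αminus ∈ Set.Ioc (0 : ℝ) 1) (hαplus : αplus ∈ Set.Ico (1 : ℝ) 2)
    (hωminus : ωminus ∈ Set.Ioc (0 : ℝ) 1)
    (hα : ∀ k, α k ∈ Set.Icc αminus αplus)
    (hω : ∀ k, ∀ i ∈ Ik k, ω k i ∈ Set.Icc ωminus 1)
    (hωsum : ∀ k, ∑ i ∈ Ik k, ω k i = 1)
    (hrec : ∀ k, x (k + 1) =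
      x k + α k • ((∑ i ∈ Ik k, ω k i • subgradProj (f i) (g i) (x k)) - x k))
    (s : ℕ) (hs : 1 ≤ s)
    (hcover : ∀ k, ∀ i : Fin m, ∃ l < s, i ∈ Jk (k + l))
    (hiii : Tendsto (fun k => (Ik k).sup' (hIkne k) fun i =>
        ‖subgradProj (f i) (g i) (x k) - x k‖) atTop (nhds 0) →
      Tendsto (fun k => (Jk k).sup' ((hIkne k).mono (hIJ k)) fun i =>
        ‖subgradProj (f i) (g i) (x k) - x k‖) atTop (nhds 0))
    (hLip : ∀ i, ∀ S : Set H, IsBounded S → ∃ L : NNReal, LipschitzOnWith L (f i) S) :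
    ∃ xinf ∈ ⋂ i, {z : H | f i z ≤ 0}, ∀ w : H,
      Tendsto (fun k => ⟪x k, w⟫) atTop (nhds ⟪xinf, w⟫) := by
  obtain ⟨z, hzC⟩ := hC
  have hz : ∀ i, f i z ≤ 0 := fun i => Set.mem_iInter.1 hzC i
  have hαk : ∀ k, 0 < α k ∧ α k < 2 := fun k =>
    ⟨lt_of_lt_of_le hαminus.1 (hα k).1, lt_of_le_of_lt (hα k).2 hαplus.2⟩
  have hωpos : ∀ k, ∀ i ∈ Ik k, 0 < ω k i := fun k i hi => lt_of_lt_of_le hωminus.1 (hω k i hi).1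
  set Q : ℕ → ℝ := fun k =>
    ∑ i ∈ Ik k, ω k i * ‖subgradProj (f i) (g i) (x k) - x k‖ ^ 2 with hQ
  have hQ0 : ∀ k, 0 ≤ Q k := fun k => Finset.sum_nonneg fun i hi =>
    mul_nonneg (hωpos k i hi).le (sq_nonneg _)
  have husum : ∀ k, (∑ i ∈ Ik k, ω k i • subgradProj (f i) (g i) (x k)) - x k
      = ∑ i ∈ Ik k, ω k i • (subgradProj (f i) (g i) (x k) - x k) := by
    intro k
    rw [eq_comm]
    calc ∑ i ∈ Ik k, ω k i • (subgradProj (f i) (g i) (x k) - x k)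
        = ∑ i ∈ Ik k, (ω k i • subgradProj (f i) (g i) (x k) - ω k i • x k) :=
          Finset.sum_congr rfl fun i _ => smul_sub _ _ _
      _ = (∑ i ∈ Ik k, ω k i • subgradProj (f i) (g i) (x k))
            - (∑ i ∈ Ik k, ω k i) • x k := by
          rw [Finset.sum_sub_distrib, Finset.sum_smul]
      _ = _ := by rw [hωsum k, one_smul]
  have hunorm : ∀ k, ‖(∑ i ∈ Ik k, ω k i • subgradProj (f i) (g i) (x k)) - x k‖
      ≤ ∑ i ∈ Ik k, ω k i * ‖subgradProj (f i) (g i) (x k) - x k‖ := by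
    intro k
    rw [husum k]
    refine (norm_sum_le _ _).trans (le_of_eq (Finset.sum_congr rfl fun i hi => ?_))
    rw [norm_smul, Real.norm_eq_abs, abs_of_nonneg (hωpos k i hi).le]
  -- key Fejér inequality
  have key : ∀ (p : H), (∀ i, f i p ≤ 0) → ∀ k,
      ‖x (k+1) - p‖ ^ 2 ≤ ‖x k - p‖ ^ 2 - α k * (2 - α k) * Q k := by
    intro p hp k
    set u : H := (∑ i ∈ Ik k, ω k i • subgradProj (f i) (g i) (x k)) - x k with hu
    have hxk1 : x (k+1) - p = (x k - p) + α k • u := by rw [hrec k, ← hu]; abel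
    have hinner : ⟪x k - p, u⟫ ≤ -Q k := by
      rw [hu, husum k, inner_sum]
      have hterm : ∀ i ∈ Ik k,
          ⟪x k - p, ω k i • (subgradProj (f i) (g i) (x k) - x k)⟫
          ≤ ω k i * (-(‖subgradProj (f i) (g i) (x k) - x k‖ ^ 2)) := by
        intro i hi
        rw [real_inner_smul_right]
        exact mul_le_mul_of_nonneg_left (subgradProj_inner_le (hsub i) (hp i) (x k))
          (hωpos k i hi).le
      calc _ ≤ ∑ i ∈ Ik k, ω k i * (-(‖subgradProj (f i) (g i) (x k) - x k‖ ^ 2)) :=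
            Finset.sum_le_sum hterm
        _ = -Q k := by
            rw [hQ, ← Finset.sum_neg_distrib]
            exact Finset.sum_congr rfl fun i _ => by ring
    have hnormu : ‖u‖ ^ 2 ≤ Q k := by
      have h1 : ‖u‖ ≤ ∑ i ∈ Ik k, ω k i * ‖subgradProj (f i) (g i) (x k) - x k‖ := by
        rw [hu]; exact hunorm k
      have h2 : (∑ i ∈ Ik k, ω k i * ‖subgradProj (f i) (g i) (x k) - x k‖) ^ 2 ≤ Q k := by
        have hcs := Finset.sum_mul_sq_le_sq_mul_sq (Ik k) (fun i => Real.sqrt (ω k i))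
          (fun i => Real.sqrt (ω k i) * ‖subgradProj (f i) (g i) (x k) - x k‖)
        have e1 : ∑ i ∈ Ik k, Real.sqrt (ω k i) *
            (Real.sqrt (ω k i) * ‖subgradProj (f i) (g i) (x k) - x k‖)
            = ∑ i ∈ Ik k, ω k i * ‖subgradProj (f i) (g i) (x k) - x k‖ :=
          Finset.sum_congr rfl fun i hi => by
            rw [← mul_assoc, Real.mul_self_sqrt (hωpos k i hi).le]
        have e2 : ∑ i ∈ Ik k, Real.sqrt (ω k i) ^ 2 = 1 := by
          rw [Finset.sum_congr rfl fun i hi => Real.sq_sqrt (hωpos k i hi).le, hωsum k]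
        have e3 : ∑ i ∈ Ik k,
            (Real.sqrt (ω k i) * ‖subgradProj (f i) (g i) (x k) - x k‖) ^ 2 = Q k := by
          rw [hQ]
          exact Finset.sum_congr rfl fun i hi => by
            rw [mul_pow, Real.sq_sqrt (hωpos k i hi).le]
        rw [e1, e2, e3, one_mul] at hcs
        exact hcs
      calc ‖u‖ ^ 2 ≤ (∑ i ∈ Ik k, ω k i * ‖subgradProj (f i) (g i) (x k) - x k‖) ^ 2 :=
            pow_le_pow_left₀ (norm_nonneg u) h1 2
        _ ≤ Q k := h2
    have hα0 := (hαk k).1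
    have hexp : ‖x (k+1) - p‖ ^ 2
        = ‖x k - p‖ ^ 2 + 2*(α k * ⟪x k - p, u⟫) + (α k)^2 * ‖u‖^2 := by
      rw [hxk1, norm_add_sq_real, real_inner_smul_right, norm_smul, mul_pow,
        Real.norm_eq_abs, sq_abs]
    have e4 : 2*(α k * ⟪x k - p, u⟫) ≤ 2*(α k * (-Q k)) := by
      have := mul_le_mul_of_nonneg_left hinner hα0.le; linarith
    have e5 : (α k)^2 * ‖u‖^2 ≤ (α k)^2 * Q k := mul_le_mul_of_nonneg_left hnormu (sq_nonneg _)
    rw [hexp]; nlinarith [e4, e5]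
  have hmono : ∀ p, (∀ i, f i p ≤ 0) → ∀ k, ‖x (k+1) - p‖^2 ≤ ‖x k - p‖^2 := by
    intro p hp k
    have h := key p hp k
    have h2 : 0 ≤ α k * (2 - α k) * Q k :=
      mul_nonneg (mul_nonneg (hαk k).1.le (by linarith [(hαk k).2])) (hQ0 k)
    linarith
  have hanti : ∀ p, (∀ i, f i p ≤ 0) → Antitone fun k => ‖x k - p‖^2 := fun p hp =>
    antitone_nat_of_succ_le (hmono p hp)
  have hlim : ∀ p, (∀ i, f i p ≤ 0) →
      ∃ d, Tendsto (fun k => ‖x k - p‖^2) atTop (nhds d) := by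
    intro p hp
    exact ⟨_, tendsto_atTop_ciInf (hanti p hp)
      ⟨0, fun y hy => by obtain ⟨k, rfl⟩ := hy; positivity⟩⟩
  obtain ⟨d, hd⟩ := hlim z hz
  have hc0 : 0 < αminus * (2 - αplus) := mul_pos hαminus.1 (by linarith [hαplus.2])
  have hQlim : Tendsto Q atTop (nhds 0) := by
    have h1 : Tendsto (fun k => ‖x (k+1) - z‖^2) atTop (nhds d) :=
      hd.comp (tendsto_add_atTop_nat 1)
    have hdiff : Tendsto (fun k => (‖x k - z‖^2 - ‖x (k+1) - z‖^2) / (αminus * (2 - αplus)))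
        atTop (nhds 0) := by
      have := (hd.sub h1).div_const (αminus * (2 - αplus))
      simpa using this
    apply squeeze_zero hQ0 _ hdiff
    intro k
    rw [le_div_iff₀ hc0]
    have h := key z hz k
    have hαα : αminus * (2 - αplus) ≤ α k * (2 - α k) :=
      mul_le_mul (hα k).1 (by linarith [(hα k).2]) (by linarith [hαplus.2]) (hαk k).1.le
    nlinarith [mul_le_mul_of_nonneg_left hαα (hQ0 k)]
  set R := ‖x 0 - z‖ with hR
  have hbound : ∀ k, ‖x k - z‖ ≤ R := by
    intro k
    have h : ‖x k - z‖^2 ≤ ‖x 0 - z‖^2 := hanti z hz (Nat.zero_le k)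
    rw [hR]
    nlinarith [norm_nonneg (x k - z), norm_nonneg (x 0 - z)]
  have hmaxI : Tendsto (fun k => (Ik k).sup' (hIkne k) fun i =>
      ‖subgradProj (f i) (g i) (x k) - x k‖) atTop (nhds 0) := by
    have hub : ∀ k, ((Ik k).sup' (hIkne k) fun i => ‖subgradProj (f i) (g i) (x k) - x k‖)
        ≤ Real.sqrt (Q k / ωminus) := by
      intro k
      rw [Finset.sup'_le_iff]
      intro i hi
      rw [← Real.sqrt_sq (norm_nonneg (subgradProj (f i) (g i) (x k) - x k))]
      apply Real.sqrt_le_sqrt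
      rw [le_div_iff₀ hωminus.1]
      calc ‖subgradProj (f i) (g i) (x k) - x k‖^2 * ωminus
          ≤ ω k i * ‖subgradProj (f i) (g i) (x k) - x k‖^2 := by
            rw [mul_comm]
            exact mul_le_mul_of_nonneg_right (hω k i hi).1 (sq_nonneg _)
        _ ≤ Q k := by
            rw [hQ]
            exact Finset.single_le_sum
              (f := fun j => ω k j * ‖subgradProj (f j) (g j) (x k) - x k‖ ^ 2)
              (fun j hj => mul_nonneg (hωpos k j hj).le (sq_nonneg _)) hi
    have hlb : ∀ k, 0 ≤ (Ik k).sup' (hIkne k) fun i =>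
        ‖subgradProj (f i) (g i) (x k) - x k‖ := by
      intro k
      obtain ⟨i, hi⟩ := hIkne k
      exact le_trans (norm_nonneg _)
        (Finset.le_sup' (fun i => ‖subgradProj (f i) (g i) (x k) - x k‖) hi)
    have hsq : Tendsto (fun k => Real.sqrt (Q k / ωminus)) atTop (nhds 0) := by
      have h1 : Tendsto (fun k => Q k / ωminus) atTop (nhds 0) := by
        simpa using hQlim.div_const ωminus
      have h2 := (Real.continuous_sqrt.tendsto 0).comp h1
      simpa [Function.comp_def] using h2
    exact squeeze_zero hlb hub hsq
  have hmaxJ := hiii hmaxI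
  have hstep : Tendsto (fun k => ‖x (k+1) - x k‖) atTop (nhds 0) := by
    have hlb : ∀ k, 0 ≤ (Ik k).sup' (hIkne k) fun i =>
        ‖subgradProj (f i) (g i) (x k) - x k‖ := by
      intro k
      obtain ⟨i, hi⟩ := hIkne k
      exact le_trans (norm_nonneg _)
        (Finset.le_sup' (fun i => ‖subgradProj (f i) (g i) (x k) - x k‖) hi)
    apply squeeze_zero (fun k => norm_nonneg _) _ (by simpa using hmaxI.const_mul 2)
    intro k
    have h0 : x (k+1) - x k
        = α k • ((∑ i ∈ Ik k, ω k i • subgradProj (f i) (g i) (x k)) - x k) := by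
      rw [hrec k]; abel
    rw [h0, norm_smul, Real.norm_eq_abs, abs_of_pos (hαk k).1]
    have h1 : ‖(∑ i ∈ Ik k, ω k i • subgradProj (f i) (g i) (x k)) - x k‖
        ≤ (Ik k).sup' (hIkne k) fun i => ‖subgradProj (f i) (g i) (x k) - x k‖ := by
      refine (hunorm k).trans ?_
      calc ∑ i ∈ Ik k, ω k i * ‖subgradProj (f i) (g i) (x k) - x k‖
          ≤ ∑ i ∈ Ik k, ω k i * ((Ik k).sup' (hIkne k) fun i =>
              ‖subgradProj (f i) (g i) (x k) - x k‖) :=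
            Finset.sum_le_sum fun i hi => mul_le_mul_of_nonneg_left
              (Finset.le_sup' (fun i => ‖subgradProj (f i) (g i) (x k) - x k‖) hi)
              (hωpos k i hi).le
        _ = _ := by rw [← Finset.sum_mul, hωsum k, one_mul]
    calc α k * ‖(∑ i ∈ Ik k, ω k i • subgradProj (f i) (g i) (x k)) - x k‖
        ≤ 2 * ((Ik k).sup' (hIkne k) fun i => ‖subgradProj (f i) (g i) (x k) - x k‖) :=
          mul_le_mul (hαk k).2.le h1 (norm_nonneg _) (by norm_num)
      _ = _ := rfl
  have hxball : ∀ k, x k ∈ closedBall z (R + 1) := by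
    intro k
    rw [mem_closedBall, dist_eq_norm]
    linarith [hbound k]
  -- claim: f i (x k) eventually < ε
  have claimF : ∀ i, ∀ ε : ℝ, 0 < ε → ∀ᶠ k in atTop, f i (x k) < ε := by
    intro i ε hε
    obtain ⟨L, hL⟩ := hLip i (closedBall z (R+1)) isBounded_closedBall
    have hL0 : (0:ℝ) ≤ (L:ℝ) := L.coe_nonneg
    have hdistf : ∀ a b : H, a ∈ closedBall z (R+1) → b ∈ closedBall z (R+1) →
        f i a - f i b ≤ (L:ℝ) * ‖a - b‖ := by
      intro a b ha hb
      have h := hL.dist_le_mul a ha b hb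
      rw [Real.dist_eq, dist_eq_norm] at h
      calc f i a - f i b ≤ |f i a - f i b| := le_abs_self _
        _ ≤ (L:ℝ) * ‖a - b‖ := h
    have hgb : ∀ k, ‖g i (x k)‖ ≤ (L:ℝ) := by
      intro k
      by_cases hg0 : g i (x k) = 0
      · rw [hg0, norm_zero]; exact hL0
      · have hng : 0 < ‖g i (x k)‖ := norm_pos_iff.2 hg0
        set y := x k with hy
        set w := y + ‖g i y‖⁻¹ • g i y with hw
        have hwy : w - y = ‖g i y‖⁻¹ • g i y := by rw [hw]; abel
        have hwynorm : ‖w - y‖ = 1 := by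
          rw [hwy, norm_smul, Real.norm_eq_abs, abs_of_pos (inv_pos.2 hng),
            inv_mul_cancel₀ hng.ne']
        have hwball : w ∈ closedBall z (R+1) := by
          rw [mem_closedBall, dist_eq_norm]
          have h1 : w - z = (y - z) + (w - y) := by abel
          rw [h1]
          refine (norm_add_le _ _).trans ?_
          rw [hwynorm]
          exact add_le_add_left (hbound k) 1
        have hinner : ⟪g i y, w - y⟫ = ‖g i y‖ := by
          rw [hwy, real_inner_smul_right, real_inner_self_eq_norm_sq, pow_two,
            inv_mul_cancel_left₀ hng.ne']
        have h2 := hsub i y w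
        have h3 := hdistf w y hwball (hxball k)
        rw [hwynorm, mul_one] at h3
        rw [hinner] at h2
        linarith
    have hfP : ∀ n, f i (x n) ≤ (L:ℝ) * ‖subgradProj (f i) (g i) (x n) - x n‖ := by
      intro n
      by_cases hpos : 0 < f i (x n)
      · have hg0 : g i (x n) ≠ 0 := by
          intro h0
          have h1 := hsub i (x n) z
          rw [h0, inner_zero_left] at h1
          linarith [hz i]
        rw [subgradProj_norm_mul (x n) hpos hg0]
        exact mul_le_mul_of_nonneg_right (hgb n) (norm_nonneg _)
      · push_neg at hpos
        exact hpos.trans (by positivity)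
    have hs0 : (0:ℝ) < (s:ℝ) := by exact_mod_cast hs
    have hδ : 0 < ε / (2 * ((L:ℝ) + 1)) := by positivity
    have hδ' : 0 < ε / (2 * (s:ℝ) * ((L:ℝ) + 1)) := by positivity
    obtain ⟨N1, hN1⟩ := (Metric.tendsto_atTop.1 hmaxJ) _ hδ
    obtain ⟨N2, hN2⟩ := (Metric.tendsto_atTop.1 hstep) _ hδ'
    rw [eventually_atTop]
    refine ⟨max N1 N2, fun k hk => ?_⟩
    obtain ⟨l, hls, hmem⟩ := hcover k i
    have hstepb : ∀ j : ℕ, ‖x (k+j) - x k‖ ≤ j * (ε / (2 * (s:ℝ) * ((L:ℝ)+1))) := by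
      intro j
      induction j with
      | zero => simp
      | succ n ih =>
        have hkn : N2 ≤ k + n :=
          le_trans (le_trans (le_max_right N1 N2) hk) (Nat.le_add_right k n)
        have h1 := hN2 (k+n) hkn
        rw [Real.dist_eq, sub_zero, abs_of_nonneg (norm_nonneg _)] at h1
        have h2 : ‖x (k+(n+1)) - x k‖ ≤ ‖x (k+n+1) - x (k+n)‖ + ‖x (k+n) - x k‖ := by
          have h3 : x (k+(n+1)) - x k = (x (k+n+1) - x (k+n)) + (x (k+n) - x k) := by
            have : k + (n+1) = k + n + 1 := rfl
            rw [this]; abel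
          rw [h3]; exact norm_add_le _ _
        push_cast
        push_cast at ih
        linarith
    have hxl : ‖x (k+l) - x k‖ ≤ ε / (2 * ((L:ℝ)+1)) := by
      have h1 := hstepb l
      have h2 : (l:ℝ) ≤ (s:ℝ) := by exact_mod_cast hls.le
      have h3 : (l:ℝ) * (ε / (2 * (s:ℝ) * ((L:ℝ)+1))) ≤
          (s:ℝ) * (ε / (2 * (s:ℝ) * ((L:ℝ)+1))) :=
        mul_le_mul_of_nonneg_right h2 hδ'.le
      have h4 : (s:ℝ) * (ε / (2 * (s:ℝ) * ((L:ℝ)+1))) = ε / (2 * ((L:ℝ)+1)) := by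
        field_simp
      linarith
    have hkl : N1 ≤ k + l := le_trans (le_trans (le_max_left N1 N2) hk) (Nat.le_add_right k l)
    have h5 := hN1 (k+l) hkl
    rw [Real.dist_eq, sub_zero] at h5
    have h6 : ‖subgradProj (f i) (g i) (x (k+l)) - x (k+l)‖
        ≤ (Jk (k+l)).sup' ((hIkne (k+l)).mono (hIJ (k+l))) fun j =>
          ‖subgradProj (f j) (g j) (x (k+l)) - x (k+l)‖ :=
      Finset.le_sup' (fun j => ‖subgradProj (f j) (g j) (x (k+l)) - x (k+l)‖) hmem
    have h7 : f i (x (k+l)) ≤ (L:ℝ) * (ε / (2 * ((L:ℝ)+1))) := by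
      refine (hfP (k+l)).trans ?_
      refine mul_le_mul_of_nonneg_left ?_ hL0
      calc ‖subgradProj (f i) (g i) (x (k+l)) - x (k+l)‖
          ≤ _ := h6
        _ ≤ ε / (2 * ((L:ℝ)+1)) := (le_abs_self _).trans h5.le
    have h8 : f i (x k) - f i (x (k+l)) ≤ (L:ℝ) * ‖x k - x (k+l)‖ :=
      hdistf (x k) (x (k+l)) (hxball k) (hxball (k+l))
    have h9 : ‖x k - x (k+l)‖ = ‖x (k+l) - x k‖ := norm_sub_rev _ _
    have h10 : (L:ℝ) * (ε / (2 * ((L:ℝ)+1))) + (L:ℝ) * (ε / (2 * ((L:ℝ)+1))) < ε := by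
      have h11 : (L:ℝ) * (ε / (2 * ((L:ℝ)+1))) + (L:ℝ) * (ε / (2 * ((L:ℝ)+1)))
          = (L:ℝ) * ε / ((L:ℝ)+1) := by field_simp; ring
      rw [h11, div_lt_iff₀ (by positivity)]
      nlinarith
    have h12 : (L:ℝ) * ‖x k - x (k+l)‖ ≤ (L:ℝ) * (ε / (2 * ((L:ℝ)+1))) := by
      rw [h9]
      exact mul_le_mul_of_nonneg_left hxl hL0
    linarith
  -- weak cluster point machinery
  have weakclus : ∀ F : Filter ℕ, F.NeBot → F ≤ atTop →
      ∃ p : H, (∀ i, f i p ≤ 0) ∧ ∀ w : H, MapClusterPt (⟪p, w⟫) F fun k => ⟪x k, w⟫ := by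
    intro F hFne hFle
    haveI := hFne
    have hK : IsCompact (WeakDual.toStrongDual ⁻¹'
        closedBall (InnerProductSpace.toDual ℝ H z) R) :=
      WeakDual.isCompact_closedBall (x' := InnerProductSpace.toDual ℝ H z) (r := R)
    have hmapb : Filter.map (fun k => StrongDual.toWeakDual
        (InnerProductSpace.toDual ℝ H (x k))) F ≤ 𝓟 (WeakDual.toStrongDual ⁻¹'
        closedBall (InnerProductSpace.toDual ℝ H z) R) := by
      rw [Filter.le_principal_iff, Filter.mem_map]
      refine Filter.univ_mem' fun k => ?_
      simp only [Set.mem_preimage, mem_closedBall, dist_eq_norm]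
      have h1 : WeakDual.toStrongDual (StrongDual.toWeakDual
          (InnerProductSpace.toDual ℝ H (x k))) = InnerProductSpace.toDual ℝ H (x k) := rfl
      rw [h1, ← map_sub, LinearIsometryEquiv.norm_map]
      exact hbound k
    obtain ⟨φ, hφmem, hφ⟩ := hK.exists_mapClusterPt hmapb
    set p : H := (InnerProductSpace.toDual ℝ H).symm (WeakDual.toStrongDual φ) with hp
    have hTp : InnerProductSpace.toDual ℝ H p = WeakDual.toStrongDual φ := by
      rw [hp]; exact LinearIsometryEquiv.apply_symm_apply _ _
    clear_value p
    have hev : ∀ w : H, MapClusterPt (⟪p, w⟫) F fun k => ⟪x k, w⟫ := by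
      intro w
      have h1 := hφ.continuousAt_comp (WeakDual.eval_continuous (𝕜 := ℝ) w).continuousAt
      have h2 : ⟪p, w⟫ = φ w := by
        rw [← InnerProductSpace.toDual_apply_apply (𝕜 := ℝ), hTp]; rfl
      have h3 : (fun k => ⟪x k, w⟫) = ((fun ψ : WeakDual ℝ H => ψ w) ∘ fun k =>
          StrongDual.toWeakDual (InnerProductSpace.toDual ℝ H (x k))) := by
        funext k
        exact (InnerProductSpace.toDual_apply_apply (𝕜 := ℝ)).symm
      rw [h2, h3]
      exact h1
    refine ⟨p, fun i => ?_, hev⟩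
    by_contra hpos
    push_neg at hpos
    have hε : 0 < f i p / 3 := by linarith
    have h1 : ∀ᶠ k in F, f i (x k) < f i p / 3 := (claimF i _ hε).filter_mono hFle
    have h2 : ∃ᶠ k in F, ⟪x k, g i p⟫ ∈ ball (⟪p, g i p⟫) (f i p / 3) :=
      mapClusterPt_iff_frequently.1 (hev (g i p)) _ (ball_mem_nhds _ hε)
    obtain ⟨k, hk2, hk1⟩ := (h2.and_eventually h1).exists
    rw [mem_ball, Real.dist_eq] at hk2
    have h3 := hsub i p (x k)
    rw [inner_sub_right] at h3
    have h4 : ⟪g i p, x k⟫ = ⟪x k, g i p⟫ := real_inner_comm _ _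
    have h5 : ⟪g i p, p⟫ = ⟪p, g i p⟫ := real_inner_comm _ _
    have h6 := abs_lt.1 hk2
    linarith [h6.1, h6.2]
  -- uniqueness of weak cluster points in C
  have uniq : ∀ p q : H, (∀ i, f i p ≤ 0) → (∀ i, f i q ≤ 0) →
      (∀ w, MapClusterPt (⟪p, w⟫) atTop fun k => ⟪x k, w⟫) →
      (∀ w, MapClusterPt (⟪q, w⟫) atTop fun k => ⟪x k, w⟫) → p = q := by
    intro p q hp hq hcp hcq
    obtain ⟨dp, hdp⟩ := hlim p hp
    obtain ⟨dq, hdq⟩ := hlim q hq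
    have hval : ∀ k, ⟪x k, p - q⟫ = (‖x k - q‖^2 - ‖x k - p‖^2 + ‖p‖^2 - ‖q‖^2)/2 := by
      intro k
      rw [inner_sub_right, norm_sub_sq_real, norm_sub_sq_real]
      ring
    have hc : Tendsto (fun k => ⟪x k, p - q⟫) atTop
        (nhds ((dq - dp + ‖p‖^2 - ‖q‖^2)/2)) := by
      simp_rw [hval]
      exact (((hdq.sub hdp).add_const (‖p‖^2)).sub_const (‖q‖^2)).div_const 2
    have h1 := (hcp (p - q)).eq_of_tendsto_real hc
    have h2 := (hcq (p - q)).eq_of_tendsto_real hc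
    have h3 : ⟪p - q, p - q⟫ = 0 := by rw [inner_sub_left, h1, h2]; ring
    have h4 : p - q = 0 := inner_self_eq_zero.1 h3
    exact sub_eq_zero.1 h4
  -- assemble
  obtain ⟨p, hpC, hpclus⟩ := weakclus atTop atTop_neBot le_rfl
  refine ⟨p, Set.mem_iInter.2 hpC, ?_⟩
  intro w
  have hM : ∀ k, |⟪x k, w⟫| ≤ (R + ‖z‖) * ‖w‖ := by
    intro k
    refine (abs_real_inner_le_norm _ _).trans (mul_le_mul_of_nonneg_right ?_ (norm_nonneg w))
    calc ‖x k‖ = ‖(x k - z) + z‖ := by rw [sub_add_cancel]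
      _ ≤ ‖x k - z‖ + ‖z‖ := norm_add_le _ _
      _ ≤ R + ‖z‖ := add_le_add_left (hbound k) _
  refine tendsto_of_mapClusterPt_unique hM ?_
  intro c' hc'
  set F : Filter ℕ := atTop ⊓ Filter.comap (fun k => ⟪x k, w⟫) (nhds c') with hF
  have hFne : F.NeBot := by
    have h1 : NeBot (nhds c' ⊓ Filter.map (fun k => ⟪x k, w⟫) atTop) := hc'
    rw [inf_comm] at h1
    have h2 : Filter.map (fun k => ⟪x k, w⟫) F
        = Filter.map (fun k => ⟪x k, w⟫) atTop ⊓ nhds c' := by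
      rw [hF]; exact Filter.push_pull _ _ _
    have h3 : NeBot (Filter.map (fun k => ⟪x k, w⟫) F) := by rw [h2]; exact h1
    exact Filter.NeBot.of_map h3
  haveI := hFne
  obtain ⟨q, hqC, hqclus⟩ := weakclus F hFne inf_le_left
  have hq_at : ∀ w', MapClusterPt (⟪q, w'⟫) atTop fun k => ⟪x k, w'⟫ :=
    fun w' => (hqclus w').mono inf_le_left
  have hq_p : q = p := uniq q p hqC hpC hq_at hpclus
  have htend : Tendsto (fun k => ⟪x k, w⟫) F (nhds c') := by
    rw [hF]
    exact tendsto_iff_comap.2 inf_le_right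
  have hqw := (hqclus w).eq_of_tendsto_real htend
  rw [← hqw, hq_p]
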